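/- Let X and Y be finite sequences of vectors in R^l with lengths M and N divisible by k, and P max-pooling with window size and stride k. Then d_F(X, Y) − B ≤ d_F(P(X), P(Y)) ≤ d_F(X, Y) + B, where B = max_{1 ≤ i ≤ M/k} ||X_i^↓ − X_i^↑||_2 + max_{1 ≤ i ≤ N/k} ||Y_i^↓ − Y_i^↑||_2. -/

import Mathlib

open scoped BigOperators



instance finNonempty {n : ℕ} [NeZero n] : Nonempty (Fin n) :=
  ⟨⟨0, Nat.pos_of_ne_zero (NeZero.ne n)⟩⟩

instance neZeroMulNat {a b : ℕ} [NeZero a] [NeZero b] : NeZero (a * b) :=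
  ⟨Nat.mul_ne_zero (NeZero.ne a) (NeZero.ne b)⟩

/-- The last index of `Fin n`. -/
def lastIdx (n : ℕ) [NeZero n] : Fin n :=
  ⟨n - 1, by have := Nat.pos_of_ne_zero (NeZero.ne n); omega⟩

/-- A monotone coupling between the index sets of two finite sequences:
it starts at the pair of first indices, ends at the pair of last indices,
and each index advances by at most one per step. -/
def IsCoupling {M N : ℕ} [NeZero M] [NeZero N] (L : List (Fin M × Fin N)) : Prop :=
  L.head? = some (0, 0) ∧
  L.getLast? = some (lastIdx M, lastIdx N) ∧
  L.Chain' fun p q =>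
    (q.1.val = p.1.val ∨ q.1.val = p.1.val + 1) ∧
    (q.2.val = p.2.val ∨ q.2.val = p.2.val + 1)

/-- The maximum matched distance of a coupling. -/
noncomputable def couplingCost {α : Type*} [PseudoMetricSpace α] {M N : ℕ}
    (x : Fin M → α) (y : Fin N → α) (L : List (Fin M × Fin N)) : ℝ :=
  (L.map fun p => dist (x p.1) (y p.2)).foldr max 0

/-- The discrete Fréchet distance between two finite sequences. -/
noncomputable def dFrechet {α : Type*} [PseudoMetricSpace α] {M N : ℕ} [NeZero M] [NeZero N]
    (x : Fin M → α) (y : Fin N → α) : ℝ :=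
  sInf {r | ∃ L, IsCoupling L ∧ couplingCost x y L = r}

/-- The global index of the `t`-th element of the `i`-th pooling block. -/
def blockIdx {a k : ℕ} (i : Fin a) (t : Fin k) : Fin (a * k) :=
  ⟨i.val * k + t.val, by
    have h1 := t.isLt
    have h2 : i.val + 1 ≤ a := i.isLt
    calc i.val * k + t.val < i.val * k + k := by omega
      _ = (i.val + 1) * k := by ring
      _ ≤ a * k := Nat.mul_le_mul_right k h2⟩

/-- Coordinate-wise 1D max-pooling with window size `k` and stride `k`. -/
noncomputable def pool {l a k : ℕ} [NeZero k] (X : Fin (a * k) → EuclideanSpace ℝ (Fin l)) :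
    Fin a → EuclideanSpace ℝ (Fin l) :=
  fun i => (WithLp.equiv 2 (Fin l → ℝ)).symm fun j =>
    Finset.univ.sup' Finset.univ_nonempty fun t : Fin k => X (blockIdx i t) j

/-- The coordinate-wise minimum vector of the `i`-th pooling block. -/
noncomputable def blockMin {l a k : ℕ} [NeZero k] (X : Fin (a * k) → EuclideanSpace ℝ (Fin l)) :
    Fin a → EuclideanSpace ℝ (Fin l) :=
  fun i => (WithLp.equiv 2 (Fin l → ℝ)).symm fun j =>
    Finset.univ.inf' Finset.univ_nonempty fun t : Fin k => X (blockIdx i t) j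


-- === auxiliary lemmas (mine) ===

theorem List.chain'_map {α β : Type*} {R : α → α → Prop} (f : β → α) {l : List β} :
    List.Chain' R (List.map f l) ↔ List.Chain' (fun a b : β => R (f a) (f b)) l :=
  List.isChain_map f

theorem List.chain'_nil {α : Type*} {R : α → α → Prop} : List.Chain' R [] := List.isChain_nil

theorem List.chain'_cons {α : Type*} {R : α → α → Prop} {x y : α} {l : List α} :
    List.Chain' R (x :: y :: l) ↔ R x y ∧ List.Chain' R (y :: l) := List.isChain_cons_cons

theorem List.chain'_append {α : Type*} {R : α → α → Prop} {l₁ l₂ : List α} :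
    List.Chain' R (l₁ ++ l₂) ↔ List.Chain' R l₁ ∧ List.Chain' R l₂ ∧
      ∀ x ∈ l₁.getLast?, ∀ y ∈ l₂.head?, R x y := List.isChain_append

theorem List.Chain'.imp {α : Type*} {R S : α → α → Prop} (H : ∀ a b, R a b → S a b)
    {l : List α} (p : List.Chain' R l) : List.Chain' S l :=
  List.IsChain.imp (fun a b h => H a b h) p

theorem List.chain'_range_succ (r : ℕ → ℕ → Prop) (n : ℕ) :
    List.Chain' r (List.range (n + 1)) ↔ ∀ m < n, r m (m + 1) :=
  List.isChain_range_succ r n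

theorem List.chain'_iff_get {α : Type*} {R : α → α → Prop} {l : List α} :
    List.Chain' R l ↔ ∀ (i : ℕ) (h : i < l.length - 1),
      R (l.get ⟨i, by omega⟩) (l.get ⟨i + 1, by omega⟩) := by
  show List.IsChain R l ↔ _
  rw [List.isChain_iff_getElem]
  simp only [List.get_eq_getElem]
  exact ⟨fun h i hi => h i (by omega), fun h i hi => h i (by omega)⟩


lemma foldr_max_nonneg (L : List ℝ) : 0 ≤ L.foldr max 0 := by
  induction L with
  | nil => simp
  | cons h t ih => exact le_max_of_le_right ih

lemma le_foldr_max {x : ℝ} {L : List ℝ} (hx : x ∈ L) : x ≤ L.foldr max 0 := by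
  induction L with
  | nil => simp at hx
  | cons h t ih =>
    rcases List.mem_cons.1 hx with rfl | hx
    · exact le_max_left _ _
    · exact le_max_of_le_right (ih hx)

lemma foldr_max_le {C : ℝ} (hC : 0 ≤ C) {L : List ℝ} (h : ∀ x ∈ L, x ≤ C) :
    L.foldr max 0 ≤ C := by
  induction L with
  | nil => simpa
  | cons a t ih =>
    exact max_le (h a (List.mem_cons_self)) (ih fun x hx => h x (List.mem_cons_of_mem _ hx))

lemma euclid_norm_le_of_abs_le {l : ℕ} {u v : EuclideanSpace ℝ (Fin l)}
    (h : ∀ j, |u j| ≤ |v j|) : ‖u‖ ≤ ‖v‖ := by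
  rw [EuclideanSpace.norm_eq, EuclideanSpace.norm_eq]
  apply Real.sqrt_le_sqrt
  apply Finset.sum_le_sum
  intro j _
  rw [Real.norm_eq_abs, Real.norm_eq_abs]
  exact pow_le_pow_left₀ (abs_nonneg _) (h j) 2

lemma exists_coupling (M N : ℕ) [NeZero M] [NeZero N] :
    ∃ L : List (Fin M × Fin N), IsCoupling L := by
  have hM := Nat.pos_of_ne_zero (NeZero.ne M)
  have hN := Nat.pos_of_ne_zero (NeZero.ne N)
  set n := max M N with hn
  have hn1 : 1 ≤ n := le_max_of_le_left hM
  obtain ⟨m, hm⟩ : ∃ m, n = m + 1 := ⟨n - 1, by omega⟩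
  refine ⟨(List.range n).map fun t =>
    ((⟨min t (M-1), by omega⟩ : Fin M), (⟨min t (N-1), by omega⟩ : Fin N)), ?_, ?_, ?_⟩
  · rw [List.head?_map, hm, List.range_succ_eq_map]
    simp only [List.head?_cons, Option.map_some]
    congr 1
  · rw [List.getLast?_map, hm, List.range_succ, List.getLast?_concat]
    simp only [Option.map_some]
    congr 1
    have hmM : M - 1 ≤ m := by omega
    have hmN : N - 1 ≤ m := by omega
    refine Prod.ext ?_ ?_ <;> apply Fin.ext <;> simp [lastIdx] <;> omega
  · rw [List.chain'_map, hm, List.chain'_range_succ]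
    intro i hi
    constructor <;> simp only <;> omega
/-- The block containing a global index. -/
def blkd {a k : ℕ} [NeZero k] (s : Fin (a * k)) : Fin a :=
  ⟨s.val / k, Nat.div_lt_of_lt_mul (lt_of_lt_of_eq s.isLt (Nat.mul_comm a k))⟩

lemma blkd_blockIdx {a k : ℕ} [NeZero k] (i : Fin a) (t : Fin k) :
    blkd (blockIdx i t) = i := by
  have hk := Nat.pos_of_ne_zero (NeZero.ne k)
  apply Fin.ext
  show (i.val * k + t.val) / k = i.val
  rw [Nat.mul_comm i.val k, Nat.mul_add_div hk, Nat.div_eq_of_lt t.isLt, Nat.add_zero]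

lemma exists_block {a k : ℕ} [NeZero k] (s : Fin (a * k)) :
    ∃ t : Fin k, blockIdx (blkd s) t = s := by
  have hk := Nat.pos_of_ne_zero (NeZero.ne k)
  refine ⟨⟨s.val % k, Nat.mod_lt _ hk⟩, Fin.ext ?_⟩
  show s.val / k * k + s.val % k = s.val
  rw [Nat.mul_comm]
  exact Nat.div_add_mod _ _
lemma pool_apply {l a k : ℕ} [NeZero k] (X : Fin (a * k) → EuclideanSpace ℝ (Fin l))
    (i : Fin a) (j : Fin l) :
    pool X i j = Finset.univ.sup' Finset.univ_nonempty fun t : Fin k => X (blockIdx i t) j := rfl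

lemma blockMin_apply {l a k : ℕ} [NeZero k] (X : Fin (a * k) → EuclideanSpace ℝ (Fin l))
    (i : Fin a) (j : Fin l) :
    blockMin X i j = Finset.univ.inf' Finset.univ_nonempty fun t : Fin k => X (blockIdx i t) j := rfl

lemma dist_le_blockGap {l a k : ℕ} [NeZero k] (X : Fin (a * k) → EuclideanSpace ℝ (Fin l))
    (s : Fin (a * k)) :
    dist (X s) (pool X (blkd s)) ≤ ‖blockMin X (blkd s) - pool X (blkd s)‖ := by
  obtain ⟨t, ht⟩ := exists_block s
  set i := blkd s with hi
  rw [dist_eq_norm]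
  apply euclid_norm_le_of_abs_le
  intro j
  rw [PiLp.sub_apply, PiLp.sub_apply, pool_apply, blockMin_apply]
  have h1 : X s j ≤ Finset.univ.sup' Finset.univ_nonempty fun t : Fin k => X (blockIdx i t) j := by
    rw [← ht]; exact Finset.le_sup' (fun t : Fin k => X (blockIdx i t) j) (Finset.mem_univ t)
  have h2 : (Finset.univ.inf' Finset.univ_nonempty fun t : Fin k => X (blockIdx i t) j) ≤ X s j := by
    rw [← ht]; exact Finset.inf'_le (fun t : Fin k => X (blockIdx i t) j) (Finset.mem_univ t)
  rw [abs_of_nonpos (by linarith), abs_of_nonpos (by linarith)]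
  linarith

-- dFrechet generic lemmas
lemma costSet_nonempty {α : Type*} [PseudoMetricSpace α] {M N : ℕ} [NeZero M] [NeZero N]
    (x : Fin M → α) (y : Fin N → α) :
    {r | ∃ L, IsCoupling L ∧ couplingCost x y L = r}.Nonempty := by
  obtain ⟨L, hL⟩ := exists_coupling M N
  exact ⟨couplingCost x y L, L, hL, rfl⟩

lemma costSet_bddBelow {α : Type*} [PseudoMetricSpace α] {M N : ℕ} [NeZero M] [NeZero N]
    (x : Fin M → α) (y : Fin N → α) :
    BddBelow {r | ∃ L, IsCoupling L ∧ couplingCost x y L = r} := by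
  refine ⟨0, fun r hr => ?_⟩
  obtain ⟨L, _, rfl⟩ := hr
  exact foldr_max_nonneg _

lemma dFrechet_le_cost {α : Type*} [PseudoMetricSpace α] {M N : ℕ} [NeZero M] [NeZero N]
    (x : Fin M → α) (y : Fin N → α) {L : List (Fin M × Fin N)} (hL : IsCoupling L) :
    dFrechet x y ≤ couplingCost x y L :=
  csInf_le (costSet_bddBelow x y) ⟨L, hL, rfl⟩

lemma le_dFrechet {α : Type*} [PseudoMetricSpace α] {M N : ℕ} [NeZero M] [NeZero N]
    (x : Fin M → α) (y : Fin N → α) {c : ℝ}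
    (h : ∀ L : List (Fin M × Fin N), IsCoupling L → c ≤ couplingCost x y L) :
    c ≤ dFrechet x y := by
  apply le_csInf (costSet_nonempty x y)
  rintro r ⟨L, hL, rfl⟩
  exact h L hL
lemma div_step {k s s' : ℕ} (hk : 0 < k) (h : s' = s ∨ s' = s + 1) :
    s' / k = s / k ∨ s' / k = s / k + 1 := by
  rcases h with rfl | rfl
  · exact Or.inl rfl
  · have h1 : s / k ≤ (s + 1) / k := Nat.div_le_div_right (Nat.le_succ s)
    have h2 : (s + 1) / k ≤ s / k + 1 := by
      have := Nat.div_le_div_right (c := k) (show s + 1 ≤ s + k by omega)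
      rwa [Nat.add_div_right s hk] at this
    omega

lemma blkd_zero {a k : ℕ} [NeZero a] [NeZero k] : blkd (0 : Fin (a * k)) = 0 := by
  apply Fin.ext
  show (0 : ℕ) / k = 0
  simp

lemma blkd_last {a k : ℕ} [NeZero a] [NeZero k] : blkd (lastIdx (a * k)) = lastIdx a := by
  have hk := Nat.pos_of_ne_zero (NeZero.ne k)
  have ha := Nat.pos_of_ne_zero (NeZero.ne a)
  apply Fin.ext
  show (a * k - 1) / k = a - 1
  have h1 : a * k - 1 = k * (a - 1) + (k - 1) := by
    have e1 : k * (a - 1) + k = k * a := by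
      rw [← Nat.mul_succ]
      congr 1
      omega
    have e2 : k * a = a * k := Nat.mul_comm k a
    omega
  rw [h1, Nat.mul_add_div hk, Nat.div_eq_of_lt (by omega), Nat.add_zero]

lemma pooled_coupling {a b k : ℕ} [NeZero a] [NeZero b] [NeZero k]
    {L : List (Fin (a * k) × Fin (b * k))} (hL : IsCoupling L) :
    IsCoupling (L.map fun p => ((blkd p.1 : Fin a), (blkd p.2 : Fin b))) := by
  have hk := Nat.pos_of_ne_zero (NeZero.ne k)
  obtain ⟨h1, h2, h3⟩ := hL
  refine ⟨?_, ?_, ?_⟩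
  · rw [List.head?_map, h1]
    simp [blkd_zero]
  · rw [List.getLast?_map, h2]
    simp [blkd_last]
  · rw [List.chain'_map]
    apply List.Chain'.imp ?_ h3
    intro p q ⟨hx, hy⟩
    exact ⟨div_step hk hx, div_step hk hy⟩
/-- step relation of couplings -/
def SRel {M N : ℕ} (p q : Fin M × Fin N) : Prop :=
  (q.1.val = p.1.val ∨ q.1.val = p.1.val + 1) ∧
  (q.2.val = p.2.val ∨ q.2.val = p.2.val + 1)

lemma isCoupling_iff {M N : ℕ} [NeZero M] [NeZero N] (L : List (Fin M × Fin N)) :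
    IsCoupling L ↔ L.head? = some (0, 0) ∧ L.getLast? = some (lastIdx M, lastIdx N) ∧
      L.Chain' SRel := Iff.rfl

def walkI {a k : ℕ} [NeZero k] (p c : Fin a) (t : Fin k) : Fin (a * k) :=
  if p = c then blockIdx c (lastIdx k) else blockIdx c t

def segP {a b k : ℕ} [NeZero k] (p c : Fin a × Fin b) : List (Fin (a*k) × Fin (b*k)) :=
  (List.finRange k).map fun t => (walkI p.1 c.1 t, walkI p.2 c.2 t)

def diagSeg {a b k : ℕ} [NeZero k] (h : Fin a × Fin b) : List (Fin (a*k) × Fin (b*k)) :=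
  (List.finRange k).map fun t => (blockIdx h.1 t, blockIdx h.2 t)

def expandAux {a b k : ℕ} [NeZero k] :
    Fin a × Fin b → List (Fin a × Fin b) → List (Fin (a*k) × Fin (b*k))
  | _, [] => []
  | p, c :: rest => segP p c ++ expandAux c rest

def expandL {a b k : ℕ} [NeZero k] : List (Fin a × Fin b) → List (Fin (a*k) × Fin (b*k))
  | [] => []
  | h :: rest => diagSeg h ++ expandAux h rest

lemma head?_map_finRange {k : ℕ} [NeZero k] {β : Type*} (f : Fin k → β) :
    ((List.finRange k).map f).head? = some (f ⟨0, Nat.pos_of_ne_zero (NeZero.ne k)⟩) := by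
  have hk := Nat.pos_of_ne_zero (NeZero.ne k)
  rw [List.head?_eq_getElem?]
  rw [List.getElem?_eq_getElem (by simp; omega)]
  congr 1
  rw [List.getElem_map, List.getElem_finRange]
  congr 1

lemma getLast?_map_finRange {k : ℕ} [NeZero k] {β : Type*} (f : Fin k → β) :
    ((List.finRange k).map f).getLast? = some (f (lastIdx k)) := by
  have hk := Nat.pos_of_ne_zero (NeZero.ne k)
  have hlen : ((List.finRange k).map f).length = k := by simp
  rw [List.getLast?_eq_getElem?, hlen]
  rw [List.getElem?_eq_getElem (by simp; omega)]
  congr 1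
  rw [List.getElem_map, List.getElem_finRange]
  congr 1

lemma chain'_map_finRange {k : ℕ} {β : Type*} (f : Fin k → β) {R : β → β → Prop}
    (h : ∀ (i : ℕ) (h1 : i < k) (h2 : i + 1 < k), R (f ⟨i, h1⟩) (f ⟨i+1, h2⟩)) :
    ((List.finRange k).map f).Chain' R := by
  rw [List.chain'_iff_get]
  intro i hi
  simp only [List.length_map, List.length_finRange] at hi
  simp only [List.get_eq_getElem, List.getElem_map, List.getElem_finRange]
  exact h i (by omega) (by omega)

lemma blkd_walkI {a k : ℕ} [NeZero k] (p c : Fin a) (t : Fin k) :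
    blkd (walkI p c t) = c := by
  unfold walkI; split <;> exact blkd_blockIdx _ _

lemma walkI_last {a k : ℕ} [NeZero k] (p c : Fin a) :
    walkI p c (lastIdx k) = blockIdx c (lastIdx k) := by
  unfold walkI; split <;> rfl

lemma walkI_step {a k : ℕ} [NeZero k] (p c : Fin a) {i : ℕ} (h1 : i < k) (h2 : i + 1 < k) :
    (walkI p c ⟨i+1, h2⟩).val = (walkI p c ⟨i, h1⟩).val ∨
    (walkI p c ⟨i+1, h2⟩).val = (walkI p c ⟨i, h1⟩).val + 1 := by
  unfold walkI; split
  · exact Or.inl rfl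
  · right; rfl

lemma walkI_junction {a k : ℕ} [NeZero k] (p c : Fin a)
    (hpc : c.val = p.val ∨ c.val = p.val + 1) :
    (walkI p c ⟨0, Nat.pos_of_ne_zero (NeZero.ne k)⟩).val = (blockIdx p (lastIdx k)).val ∨
    (walkI p c ⟨0, Nat.pos_of_ne_zero (NeZero.ne k)⟩).val = (blockIdx p (lastIdx k)).val + 1 := by
  have hk := Nat.pos_of_ne_zero (NeZero.ne k)
  unfold walkI; split
  · rename_i hp
    left
    rw [← hp]
  · rename_i hp
    right
    have hc : c.val = p.val + 1 := by
      rcases hpc with h | h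
      · exact absurd (Fin.ext h.symm) hp
      · exact h
    show c.val * k + 0 = p.val * k + (k - 1) + 1
    rw [hc, Nat.succ_mul]
    omega

lemma blockIdx_last {a k : ℕ} [NeZero a] [NeZero k] :
    blockIdx (lastIdx a) (lastIdx k) = lastIdx (a * k) := by
  have hk := Nat.pos_of_ne_zero (NeZero.ne k)
  have ha := Nat.pos_of_ne_zero (NeZero.ne a)
  apply Fin.ext
  show (a - 1) * k + (k - 1) = a * k - 1
  have e1 : (a - 1) * k + k = a * k := by
    rw [← Nat.succ_mul]
    congr 1
    omega
  omega
lemma segP_chain {a b k : ℕ} [NeZero k] (p c : Fin a × Fin b) :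
    (segP (k:=k) p c).Chain' SRel := by
  apply chain'_map_finRange
  intro i h1 h2
  exact ⟨walkI_step p.1 c.1 h1 h2, walkI_step p.2 c.2 h1 h2⟩

lemma segP_getLast {a b k : ℕ} [NeZero k] (p c : Fin a × Fin b) :
    (segP (k:=k) p c).getLast? = some (blockIdx c.1 (lastIdx k), blockIdx c.2 (lastIdx k)) := by
  rw [segP, getLast?_map_finRange, walkI_last, walkI_last]

lemma segP_head {a b k : ℕ} [NeZero k] (p c : Fin a × Fin b) (hpc : SRel p c) :
    ∀ x ∈ (segP (k:=k) p c).head?,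
      SRel ((blockIdx p.1 (lastIdx k) : Fin (a*k)), (blockIdx p.2 (lastIdx k) : Fin (b*k))) x := by
  intro x hx
  rw [segP, head?_map_finRange, Option.mem_def, Option.some_inj] at hx
  subst hx
  exact ⟨walkI_junction p.1 c.1 hpc.1, walkI_junction p.2 c.2 hpc.2⟩

lemma expandAux_spec {a b k : ℕ} [NeZero k] (L : List (Fin a × Fin b))
    (p : Fin a × Fin b) (hch : (p :: L).Chain' SRel) :
    (expandAux (k:=k) p L).Chain' SRel ∧
    (∀ x ∈ (expandAux p L).head?,
      SRel ((blockIdx p.1 (lastIdx k) : Fin (a*k)), (blockIdx p.2 (lastIdx k) : Fin (b*k))) x) ∧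
    (expandAux p L).getLast? =
      Option.map (fun c => ((blockIdx c.1 (lastIdx k) : Fin (a*k)),
        (blockIdx c.2 (lastIdx k) : Fin (b*k)))) L.getLast? := by
  induction L generalizing p with
  | nil => exact ⟨List.chain'_nil, by simp [expandAux], by simp [expandAux]⟩
  | cons c rest ih =>
    rw [List.chain'_cons] at hch
    obtain ⟨hpc, htail⟩ := hch
    obtain ⟨ih1, ih2, ih3⟩ := ih c htail
    have hseg : expandAux (k:=k) p (c :: rest) = segP (k:=k) p c ++ expandAux (k:=k) c rest := rfl
    refine ⟨?_, ?_, ?_⟩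
    · rw [hseg, List.chain'_append]
      refine ⟨segP_chain p c, ih1, ?_⟩
      intro x hx y hy
      rw [segP_getLast, Option.mem_def, Option.some_inj] at hx
      subst hx
      exact ih2 y hy
    · intro x hx
      rw [hseg, List.head?_append] at hx
      have hne : (segP (k:=k) p c).head?.isSome := by
        rw [segP, head?_map_finRange]; rfl
      rw [Option.or_of_isSome hne] at hx
      exact segP_head p c hpc x hx
    · rw [hseg, List.getLast?_append, ih3]
      cases hrest : rest.getLast? with
      | none =>
        have : rest = [] := List.getLast?_eq_none_iff.1 hrest
        subst this
        simp [segP_getLast]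
      | some q =>
        have : (c :: rest).getLast? = rest.getLast? := by
          cases rest with
          | nil => simp at hrest
          | cons r rs => rw [List.getLast?_cons_cons]
        rw [this, hrest]
        rfl
lemma diagSeg_chain {a b k : ℕ} [NeZero k] (h : Fin a × Fin b) :
    (diagSeg (k:=k) h).Chain' SRel := by
  apply chain'_map_finRange
  intro i h1 h2
  exact ⟨Or.inr rfl, Or.inr rfl⟩

lemma diagSeg_getLast {a b k : ℕ} [NeZero k] (h : Fin a × Fin b) :
    (diagSeg (k:=k) h).getLast? = some (blockIdx h.1 (lastIdx k), blockIdx h.2 (lastIdx k)) := by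
  rw [diagSeg, getLast?_map_finRange]

lemma diagSeg_head {a b k : ℕ} [NeZero k] (h : Fin a × Fin b) :
    (diagSeg (k:=k) h).head? = some
      (blockIdx h.1 ⟨0, Nat.pos_of_ne_zero (NeZero.ne k)⟩,
       blockIdx h.2 ⟨0, Nat.pos_of_ne_zero (NeZero.ne k)⟩) := by
  rw [diagSeg, head?_map_finRange]

lemma blockIdx_zero {a k : ℕ} [NeZero a] [NeZero k] :
    blockIdx (0 : Fin a) (⟨0, Nat.pos_of_ne_zero (NeZero.ne k)⟩ : Fin k) = (0 : Fin (a * k)) := by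
  apply Fin.ext
  show (0 : Fin a).val * k + 0 = (0 : Fin (a*k)).val
  simp

lemma option_some_or {α : Type*} (x : α) (o : Option α) : (some x).or o = some x := rfl
lemma option_none_or {α : Type*} (o : Option α) : (Option.none).or o = o := rfl

lemma expandL_isCoupling {a b k : ℕ} [NeZero a] [NeZero b] [NeZero k]
    {L : List (Fin a × Fin b)} (hL : IsCoupling L) :
    IsCoupling (expandL (k:=k) L) := by
  obtain ⟨h1, h2, h3⟩ := hL
  cases L with
  | nil => simp at h1
  | cons h rest =>
    rw [List.head?_cons, Option.some_inj] at h1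
    subst h1
    have hexp : expandL (k:=k) ((((0:Fin a),(0:Fin b))) :: rest) =
        diagSeg (k:=k) ((0:Fin a),(0:Fin b)) ++ expandAux (k:=k) ((0:Fin a),(0:Fin b)) rest := rfl
    obtain ⟨s1, s2, s3⟩ := expandAux_spec (k:=k) rest ((0:Fin a),(0:Fin b)) h3
    rw [isCoupling_iff]
    refine ⟨?_, ?_, ?_⟩
    · rw [hexp, List.head?_append, diagSeg_head, option_some_or, Option.some_inj]
      exact Prod.ext blockIdx_zero blockIdx_zero
    · rw [hexp, List.getLast?_append, s3]
      cases rest with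
      | nil =>
        rw [List.getLast?_singleton, Option.some_inj] at h2
        have h2a : (0 : Fin a) = lastIdx a := congrArg Prod.fst h2
        have h2b : (0 : Fin b) = lastIdx b := congrArg Prod.snd h2
        rw [List.getLast?_nil, Option.map_none, option_none_or, diagSeg_getLast,
          Option.some_inj]
        refine Prod.ext ?_ ?_
        · show blockIdx ((0:Fin a),(0:Fin b)).1 (lastIdx k) = lastIdx (a*k)
          rw [show ((0:Fin a),(0:Fin b)).1 = lastIdx a from h2a]
          exact blockIdx_last
        · show blockIdx ((0:Fin a),(0:Fin b)).2 (lastIdx k) = lastIdx (b*k)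
          rw [show ((0:Fin a),(0:Fin b)).2 = lastIdx b from h2b]
          exact blockIdx_last
      | cons r rs =>
        rw [List.getLast?_cons_cons] at h2
        rw [h2, Option.map_some, option_some_or, Option.some_inj]
        refine Prod.ext ?_ ?_
        · exact blockIdx_last
        · exact blockIdx_last
    · rw [hexp, List.chain'_append]
      refine ⟨diagSeg_chain _, s1, ?_⟩
      intro x hx y hy
      rw [diagSeg_getLast, Option.mem_def, Option.some_inj] at hx
      subst hx
      exact s2 y hy

lemma mem_expandAux {a b k : ℕ} [NeZero k] {L : List (Fin a × Fin b)}
    {p : Fin a × Fin b} {x : Fin (a*k) × Fin (b*k)} (hx : x ∈ expandAux (k:=k) p L) :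
    ∃ c ∈ L, blkd x.1 = c.1 ∧ blkd x.2 = c.2 := by
  induction L generalizing p with
  | nil => simp [expandAux] at hx
  | cons c rest ih =>
    rw [show expandAux (k:=k) p (c :: rest) = segP (k:=k) p c ++ expandAux (k:=k) c rest from rfl,
      List.mem_append] at hx
    rcases hx with hx | hx
    · rw [segP, List.mem_map] at hx
      obtain ⟨t, _, rfl⟩ := hx
      exact ⟨c, List.mem_cons_self, blkd_walkI _ _ _, blkd_walkI _ _ _⟩
    · obtain ⟨c', hc', h⟩ := ih hx
      exact ⟨c', List.mem_cons_of_mem _ hc', h⟩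

lemma mem_expandL {a b k : ℕ} [NeZero k] {L : List (Fin a × Fin b)}
    {x : Fin (a*k) × Fin (b*k)} (hx : x ∈ expandL (k:=k) L) :
    ∃ c ∈ L, blkd x.1 = c.1 ∧ blkd x.2 = c.2 := by
  cases L with
  | nil => simp [expandL] at hx
  | cons h rest =>
    rw [show expandL (k:=k) (h :: rest) = diagSeg (k:=k) h ++ expandAux (k:=k) h rest from rfl,
      List.mem_append] at hx
    rcases hx with hx | hx
    · rw [diagSeg, List.mem_map] at hx
      obtain ⟨t, _, rfl⟩ := hx
      exact ⟨h, List.mem_cons_self, blkd_blockIdx _ _, blkd_blockIdx _ _⟩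
    · obtain ⟨c', hc', hh⟩ := mem_expandAux hx
      exact ⟨c', List.mem_cons_of_mem _ hc', hh⟩
theorem pooling_two_sided_bound {l a b k : ℕ} [NeZero a] [NeZero b] [NeZero k]
    (X : Fin (a * k) → EuclideanSpace ℝ (Fin l))
    (Y : Fin (b * k) → EuclideanSpace ℝ (Fin l)) (B : ℝ)
    (hB : B = (Finset.univ.sup' Finset.univ_nonempty fun i : Fin a =>
        ‖blockMin X i - pool X i‖) +
      (Finset.univ.sup' Finset.univ_nonempty fun i : Fin b =>
        ‖blockMin Y i - pool Y i‖)) :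
    dFrechet X Y - B ≤ dFrechet (pool X) (pool Y) ∧
    dFrechet (pool X) (pool Y) ≤ dFrechet X Y + B := by
  have hk := Nat.pos_of_ne_zero (NeZero.ne k)
  set BX := (Finset.univ.sup' Finset.univ_nonempty fun i : Fin a =>
    ‖blockMin X i - pool X i‖) with hBX
  set BY := (Finset.univ.sup' Finset.univ_nonempty fun i : Fin b =>
    ‖blockMin Y i - pool Y i‖) with hBY
  have hBX0 : 0 ≤ BX := le_trans (norm_nonneg _)
    (Finset.le_sup' (fun i : Fin a => ‖blockMin X i - pool X i‖) (Finset.mem_univ (0 : Fin a)))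
  have hBY0 : 0 ≤ BY := le_trans (norm_nonneg _)
    (Finset.le_sup' (fun i : Fin b => ‖blockMin Y i - pool Y i‖) (Finset.mem_univ (0 : Fin b)))
  have hXs : ∀ s : Fin (a*k), dist (X s) (pool X (blkd s)) ≤ BX := fun s =>
    (dist_le_blockGap X s).trans
      (Finset.le_sup' (fun i : Fin a => ‖blockMin X i - pool X i‖) (Finset.mem_univ (blkd s)))
  have hYs : ∀ t : Fin (b*k), dist (Y t) (pool Y (blkd t)) ≤ BY := fun t =>
    (dist_le_blockGap Y t).trans
      (Finset.le_sup' (fun i : Fin b => ‖blockMin Y i - pool Y i‖) (Finset.mem_univ (blkd t)))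
  constructor
  · -- lower bound
    apply le_dFrechet
    intro L hL
    have hcoup : IsCoupling (expandL (k:=k) L) := expandL_isCoupling hL
    have h1 : dFrechet X Y ≤ couplingCost X Y (expandL (k:=k) L) := dFrechet_le_cost X Y hcoup
    have h2 : couplingCost X Y (expandL (k:=k) L) ≤ couplingCost (pool X) (pool Y) L + B := by
      show ((expandL (k:=k) L).map fun p => dist (X p.1) (Y p.2)).foldr max 0 ≤ _
      apply foldr_max_le
      · have := foldr_max_nonneg (L.map fun p => dist (pool X p.1) (pool Y p.2))
        have hc : (0:ℝ) ≤ couplingCost (pool X) (pool Y) L := this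
        rw [hB]; linarith
      · intro r hr
        rw [List.mem_map] at hr
        obtain ⟨q, hq, rfl⟩ := hr
        obtain ⟨c, hcL, hc1, hc2⟩ := mem_expandL hq
        have hd : dist (pool X c.1) (pool Y c.2) ≤ couplingCost (pool X) (pool Y) L :=
          le_foldr_max (List.mem_map_of_mem hcL)
        have tri : dist (X q.1) (Y q.2) ≤ dist (X q.1) (pool X (blkd q.1)) +
            dist (pool X (blkd q.1)) (pool Y (blkd q.2)) +
            dist (pool Y (blkd q.2)) (Y q.2) := dist_triangle4 _ _ _ _
        rw [hc1, hc2] at tri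
        have h3 := hXs q.1
        have h4 := hYs q.2
        rw [hc1] at h3
        rw [hc2] at h4
        rw [dist_comm (pool Y c.2) (Y q.2)] at tri
        rw [hB]
        linarith
    linarith
  · -- upper bound
    have key : ∀ L : List (Fin (a*k) × Fin (b*k)), IsCoupling L →
        dFrechet (pool X) (pool Y) - B ≤ couplingCost X Y L := by
      intro L hL
      have hcoup := pooled_coupling hL
      have h1 : dFrechet (pool X) (pool Y) ≤
          couplingCost (pool X) (pool Y) (L.map fun p => (blkd p.1, blkd p.2)) :=
        dFrechet_le_cost _ _ hcoup
      have h2 : couplingCost (pool X) (pool Y) (L.map fun p => (blkd p.1, blkd p.2)) ≤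
          couplingCost X Y L + B := by
        show (((L.map fun p => ((blkd p.1 : Fin a), (blkd p.2 : Fin b))).map
          fun p => dist (pool X p.1) (pool Y p.2)).foldr max 0) ≤ _
        apply foldr_max_le
        · have hc : (0:ℝ) ≤ couplingCost X Y L := foldr_max_nonneg _
          rw [hB]; linarith
        · intro r hr
          rw [List.map_map, List.mem_map] at hr
          obtain ⟨q, hq, rfl⟩ := hr
          have hd : dist (X q.1) (Y q.2) ≤ couplingCost X Y L :=
            le_foldr_max (List.mem_map_of_mem hq)
          have tri : dist (pool X (blkd q.1)) (pool Y (blkd q.2)) ≤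
              dist (pool X (blkd q.1)) (X q.1) + dist (X q.1) (Y q.2) +
              dist (Y q.2) (pool Y (blkd q.2)) := dist_triangle4 _ _ _ _
          have h3 := hXs q.1
          have h4 := hYs q.2
          show dist (pool X (blkd q.1)) (pool Y (blkd q.2)) ≤ _
          rw [hB]
          linarith [dist_comm (pool X (blkd q.1)) (X q.1),
            dist_comm (pool Y (blkd q.2)) (Y q.2)]
      linarith
    have := le_dFrechet X Y key
    linarith
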